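/- Let μ be a finite Borel measure on ℝ^d with closed support K_μ, let Λ ⊂ ℝ^d be countable, let φ : K_μ → ℝ^d be Borel measurable, and let ν = φ_*μ be the pushforward measure. Then E(Λ, φ) = {x ↦ e^{2πi λ·φ(x)} : λ ∈ Λ} is an orthogonal basis for L²(μ) if and only if φ is μ-essentially injective and ν is a spectral measure with spectrum Λ. -/

import Mathlib

open MeasureTheory Filter Set
open scoped Real ENNReal Topology

noncomputable section

/-- `e2pi t = e^{2π i t}`. -/
def e2pi (t : ℝ) : ℂ := Complex.exp (2 * Real.pi * Complex.I * t)

/-- The Euclidean dot product on `Fin d → ℝ`. -/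
def dotp {d : ℕ} (a b : Fin d → ℝ) : ℝ := ∑ i, a i * b i

/-- `φ` is `μ`-essentially injective. -/
def EssInj {α β : Type*} [MeasurableSpace α] [MeasurableSpace β]
    (μ : Measure α) (φ : α → β) : Prop :=
  ∀ f : α → ℂ, MemLp f 2 μ →
    ∃ h : β → ℂ, MemLp h 2 (Measure.map φ μ) ∧ f =ᵐ[μ] fun x => h (φ x)

/-- The family `E(Λ, φ)` is complete in `L²(μ)`. -/
def CompleteExp {α : Type*} [MeasurableSpace α] {d : ℕ}
    (μ : Measure α) (Λ : Set (Fin d → ℝ)) (φ : α → Fin d → ℝ) : Prop :=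
  ∀ g : α → ℂ, MemLp g 2 μ →
    (∀ lam ∈ Λ, ∫ x, g x * (starRingEnd ℂ) (e2pi (dotp lam (φ x))) ∂μ = 0) →
    g =ᵐ[μ] 0

/-- The family `E(Λ, φ) = {x ↦ e^{2π i λ·φ(x)} : λ ∈ Λ}` is an orthogonal basis of `L²(μ)`:
a complete, pairwise orthogonal family of nonzero vectors. -/
def OrthBasisExp {α : Type*} [MeasurableSpace α] {d : ℕ}
    (μ : Measure α) (Λ : Set (Fin d → ℝ)) (φ : α → Fin d → ℝ) : Prop :=
  (∀ lam ∈ Λ, ∀ lam' ∈ Λ, lam ≠ lam' →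
      ∫ x, e2pi (dotp lam (φ x)) * (starRingEnd ℂ) (e2pi (dotp lam' (φ x))) ∂μ = 0) ∧
  (∀ lam ∈ Λ, (∫ x, ‖e2pi (dotp lam (φ x))‖ ^ 2 ∂μ) ≠ 0) ∧
  CompleteExp μ Λ φ

/-- `ν` is a spectral measure with spectrum `Λ`: the exponentials `E(Λ)` form an
orthogonal basis of `L²(ν)`. -/
def IsSpectralMeasure {d : ℕ} (ν : Measure (Fin d → ℝ)) (Λ : Set (Fin d → ℝ)) : Prop :=
  OrthBasisExp ν Λ id

lemma norm_e2pi (t : ℝ) : ‖e2pi t‖ = 1 := by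
  rw [e2pi, Complex.norm_exp]
  have : (2 * ↑Real.pi * Complex.I * ↑t).re = 0 := by
    simp [Complex.mul_re, Complex.mul_im]
  rw [this, Real.exp_zero]

lemma continuous_E {d : ℕ} (lam : Fin d → ℝ) :
    Continuous fun y : Fin d → ℝ => e2pi (dotp lam y) := by
  have h1 : Continuous fun y : Fin d → ℝ => dotp lam y := by
    unfold dotp
    exact continuous_finset_sum _ fun i _ => continuous_const.mul (continuous_apply i)
  have h2 : Continuous e2pi := by
    unfold e2pi
    exact Complex.continuous_exp.comp (continuous_const.mul Complex.continuous_ofReal)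
  exact h2.comp h1

lemma continuous_Econj {d : ℕ} (lam : Fin d → ℝ) :
    Continuous fun y : Fin d → ℝ => (starRingEnd ℂ) (e2pi (dotp lam y)) := by
  simp only [starRingEnd_apply]
  exact (continuous_E lam).star

lemma memLp_E {d : ℕ} (ν : Measure (Fin d → ℝ)) [IsFiniteMeasure ν] (lam : Fin d → ℝ) :
    MemLp (fun y => e2pi (dotp lam y)) 2 ν :=
  MemLp.of_bound (continuous_E lam).aestronglyMeasurable 1
    (Eventually.of_forall fun _ => (norm_e2pi _).le)


set_option synthInstance.maxHeartbeats 1000000 in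
/-- `E(Λ, φ)` is an orthogonal basis for `L²(μ)` iff `φ` is `μ`-essentially
injective and `ν = φ⋆μ` is a spectral measure with spectrum `Λ`. -/
theorem statement3 {d : ℕ} (μ : Measure (Fin d → ℝ)) [IsFiniteMeasure μ]
    (Λ : Set (Fin d → ℝ)) (hΛ : Λ.Countable)
    (φ : (Fin d → ℝ) → (Fin d → ℝ)) (hφ : Measurable φ) :
    OrthBasisExp μ Λ φ ↔ (EssInj μ φ ∧ IsSpectralMeasure (Measure.map φ μ) Λ) := by
  set ν := Measure.map φ μ with hνdef
  have hmp : MeasurePreserving φ μ ν := ⟨hφ, rfl⟩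
  -- transfer of integrals along the pushforward
  have hint : ∀ g : (Fin d → ℝ) → ℂ, AEStronglyMeasurable g ν →
      ∫ y, g y ∂ν = ∫ x, g (φ x) ∂μ := fun g hg => integral_map hφ.aemeasurable hg
  have hintR : ∀ g : (Fin d → ℝ) → ℝ, AEStronglyMeasurable g ν →
      ∫ y, g y ∂ν = ∫ x, g (φ x) ∂μ := fun g hg => integral_map hφ.aemeasurable hg
  have horth : ∀ lam lam' : Fin d → ℝ,
      ∫ y, e2pi (dotp lam y) * (starRingEnd ℂ) (e2pi (dotp lam' y)) ∂ν
        = ∫ x, e2pi (dotp lam (φ x)) * (starRingEnd ℂ) (e2pi (dotp lam' (φ x))) ∂μ :=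
    fun lam lam' => hint _ ((continuous_E lam).mul (continuous_Econj lam')).aestronglyMeasurable
  have hnorm : ∀ lam : Fin d → ℝ,
      ∫ y, ‖e2pi (dotp lam y)‖ ^ 2 ∂ν = ∫ x, ‖e2pi (dotp lam (φ x))‖ ^ 2 ∂μ :=
    fun lam => hintR _ ((continuous_E lam).norm.pow 2).aestronglyMeasurable
  -- Key 1: completeness over μ implies essential injectivity and completeness over ν
  have key1 : CompleteExp μ Λ φ → EssInj μ φ ∧ CompleteExp ν Λ id := by
    intro hc
    constructor
    · -- essential injectivity via orthogonal projection onto the range of composition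
      intro f hf
      let T : Lp ℂ 2 ν →ₗᵢ[ℂ] Lp ℂ 2 μ := Lp.compMeasurePreservingₗᵢ ℂ φ hmp
      let K : Submodule ℂ (Lp ℂ 2 μ) := (⊤ : Submodule ℂ (Lp ℂ 2 ν)).map (T : Lp ℂ 2 ν →ₗ[ℂ] Lp ℂ 2 μ)
      haveI hT : CompleteSpace (⊤ : Submodule ℂ (Lp ℂ 2 ν)) := by
        refine IsComplete.completeSpace_coe ?_
        simpa using complete_univ (α := Lp ℂ 2 ν)
      haveI : CompleteSpace K := LinearIsometry.completeSpace_map T ⊤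
      obtain ⟨v, hvK, w, hwo, hvw⟩ := Submodule.exists_add_mem_mem_orthogonal (K := K) (hf.toLp f)
      have hw0 : w = 0 := by
        have h0 : (w : (Fin d → ℝ) → ℂ) =ᵐ[μ] 0 := by
          refine hc _ (Lp.memLp w) ?_
          intro lam hlam
          set eν : Lp ℂ 2 ν := (memLp_E ν lam).toLp _ with heν
          have hTK : (T eν : Lp ℂ 2 μ) ∈ K := ⟨eν, trivial, rfl⟩
          have hip : (inner ℂ (T eν) w : ℂ) = 0 :=
            Submodule.inner_right_of_mem_orthogonal hTK hwo
          have hcoe : (T eν : (Fin d → ℝ) → ℂ) =ᵐ[μ] fun x => e2pi (dotp lam (φ x)) := by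
            have h1 : (T eν : (Fin d → ℝ) → ℂ) =ᵐ[μ] (eν : (Fin d → ℝ) → ℂ) ∘ φ :=
              Lp.coeFn_compMeasurePreserving eν hmp
            have h2 : (eν : (Fin d → ℝ) → ℂ) =ᵐ[ν] fun y => e2pi (dotp lam y) :=
              MemLp.coeFn_toLp _
            have h3 : ∀ᵐ y ∂ν, (eν : (Fin d → ℝ) → ℂ) y = e2pi (dotp lam y) := h2
            exact h1.trans (ae_of_ae_map (p := fun y => (eν : (Fin d → ℝ) → ℂ) y = e2pi (dotp lam y)) hφ.aemeasurable h3)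
          have hinner : (inner ℂ (T eν) w : ℂ)
              = ∫ x, (starRingEnd ℂ) ((T eν : (Fin d → ℝ) → ℂ) x) * (w : (Fin d → ℝ) → ℂ) x ∂μ := by
            rw [L2.inner_def]
            simp only [RCLike.inner_apply']
          have h4 : ∫ x, (w : (Fin d → ℝ) → ℂ) x * (starRingEnd ℂ) (e2pi (dotp lam (φ x))) ∂μ
              = ∫ x, (starRingEnd ℂ) ((T eν : (Fin d → ℝ) → ℂ) x) * (w : (Fin d → ℝ) → ℂ) x ∂μ := by
            refine integral_congr_ae ?_
            filter_upwards [hcoe] with x hx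
            rw [hx, mul_comm]
          rw [h4, ← hinner, hip]
        exact Lp.ext (h0.trans (Lp.coeFn_zero ℂ 2 μ).symm)
      rw [hw0, add_zero] at hvw
      rcases Submodule.mem_map.mp (hvw ▸ hvK) with ⟨gν, -, hg⟩
      refine ⟨gν, Lp.memLp gν, ?_⟩
      have h1 : f =ᵐ[μ] (hf.toLp f : (Fin d → ℝ) → ℂ) := (MemLp.coeFn_toLp hf).symm
      have h2 : ((hf.toLp f : Lp ℂ 2 μ) : (Fin d → ℝ) → ℂ)
          =ᵐ[μ] fun x => (gν : (Fin d → ℝ) → ℂ) (φ x) := by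
        rw [← hg]
        exact Lp.coeFn_compMeasurePreserving gν hmp
      exact h1.trans h2
    · -- completeness downstairs
      intro g hg hgint
      have hgφ : MemLp (g ∘ φ) 2 μ := hg.comp_measurePreserving hmp
      have h0 : (g ∘ φ) =ᵐ[μ] 0 := by
        refine hc _ hgφ ?_
        intro lam hlam
        have h1 := hgint lam hlam
        simp only [id_eq] at h1
        rw [← h1]
        exact (hint (fun y => g y * (starRingEnd ℂ) (e2pi (dotp lam y)))
          (hg.aestronglyMeasurable.mul
            (continuous_Econj lam).aestronglyMeasurable)).symm
      set g' := hg.aestronglyMeasurable.mk g with hg'def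
      have hgg' : g =ᵐ[ν] g' := hg.aestronglyMeasurable.ae_eq_mk
      have hg'm : Measurable g' := hg.aestronglyMeasurable.stronglyMeasurable_mk.measurable
      have h2 : ∀ᵐ x ∂μ, g' (φ x) = 0 := by
        have hgg'' : ∀ᵐ y ∂ν, g y = g' y := hgg'
        have h1 : ∀ᵐ x ∂μ, g (φ x) = g' (φ x) :=
          ae_of_ae_map (p := fun y => g y = g' y) hφ.aemeasurable hgg''
        filter_upwards [h1, h0] with x hx1 hx0
        rw [← hx1]
        simpa using hx0
      have h3 : ∀ᵐ y ∂ν, g' y = 0 :=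
        (ae_map_iff hφ.aemeasurable (hg'm (measurableSet_singleton (0:ℂ)))).2 h2
      exact hgg'.trans h3
  -- Key 2: essential injectivity and completeness downstairs give completeness upstairs
  have key2 : EssInj μ φ → CompleteExp ν Λ id → CompleteExp μ Λ φ := by
    intro hinj hcν g hg hgint
    obtain ⟨h, hh, hgh⟩ := hinj g hg
    have hh0 : h =ᵐ[ν] 0 := by
      refine hcν _ hh ?_
      intro lam hlam
      simp only [id_eq]
      rw [hint (fun y => h y * (starRingEnd ℂ) (e2pi (dotp lam y)))
        (hh.aestronglyMeasurable.mul (continuous_Econj lam).aestronglyMeasurable)]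
      rw [← hgint lam hlam]
      refine integral_congr_ae ?_
      filter_upwards [hgh] with x hx
      rw [hx]
    have hh0' : ∀ᵐ y ∂ν, h y = 0 := hh0
    have h5 : ∀ᵐ x ∂μ, h (φ x) = 0 :=
      ae_of_ae_map (p := fun y => h y = 0) hφ.aemeasurable hh0'
    refine hgh.trans ?_
    filter_upwards [h5] with x hx
    simpa using hx
  constructor
  · rintro ⟨ho, hn, hc⟩
    obtain ⟨hinj, hcν⟩ := key1 hc
    refine ⟨hinj, ⟨?_, ?_, hcν⟩⟩
    · intro lam hl lam' hl' hne
      simp only [id_eq]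
      rw [horth]
      exact ho lam hl lam' hl' hne
    · intro lam hl
      simp only [id_eq]
      rw [hnorm]
      exact hn lam hl
  · rintro ⟨hinj, ho, hn, hc⟩
    refine ⟨?_, ?_, key2 hinj hc⟩
    · intro lam hl lam' hl' hne
      rw [← horth]
      have := ho lam hl lam' hl' hne
      simpa only [id_eq] using this
    · intro lam hl
      rw [← hnorm]
      have := hn lam hl
      simpa only [id_eq] using this
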